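/- Let T : 𝒰(𝔤) → 𝒰(𝔞) be an 𝒪-Hopf operator on the universal envelope of a right Lie module (𝔤, ◁, 𝔞). Then T is invertible for the product # with T^{#−1} = T ∘ S_{𝒰(𝔤)}, i.e. T # (T ∘ S) = η∘ε = (T ∘ S) # T, where (A # B)(f) = A(f₍₁₎ ◁◁ S_{𝒰(𝔞)}(B(f₍₂₎)₍₁₎)) B(f₍₂₎)₍₂₎. -/

import Mathlib

open TensorProduct

/-- The `#`-product of linear maps `A, B : H → K`:
`(A # B)(f) = A(f₍₁₎ ◁◁ S_K((B f₍₂₎)₍₁₎)) · (B f₍₂₎)₍₂₎`. -/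
noncomputable def hashMul {R H K : Type*} [CommRing R] [Ring H] [Ring K]
    [HopfAlgebra R H] [HopfAlgebra R K]
    (act : H →ₗ[R] K →ₗ[R] H) (A B : H →ₗ[R] K) : H →ₗ[R] K :=
  (LinearMap.mul' R K)
    ∘ₗ (TensorProduct.map A LinearMap.id)
    ∘ₗ (TensorProduct.map (TensorProduct.lift act) LinearMap.id)
    ∘ₗ (TensorProduct.map
          (TensorProduct.map LinearMap.id (HopfAlgebra.antipode (R := R))) LinearMap.id)
    ∘ₗ (TensorProduct.assoc R H K K).symm.toLinearMap
    ∘ₗ (TensorProduct.map LinearMap.id (Coalgebra.comul ∘ₗ B))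
    ∘ₗ Coalgebra.comul

/-- The product `e ⋆_T f := (e ◁◁ T f₍₁₎) f₍₂₎` on `H`. -/
noncomputable def starT {R H K : Type*} [CommRing R] [Ring H] [Ring K]
    [HopfAlgebra R H] [HopfAlgebra R K]
    (act : H →ₗ[R] K →ₗ[R] H) (T : H →ₗ[R] K) (e f : H) : H :=
  (LinearMap.mul' R H) ((TensorProduct.map ((act e) ∘ₗ T) LinearMap.id) (Coalgebra.comul f))

set_option synthInstance.maxHeartbeats 400000
set_option maxHeartbeats 1000000

namespace Stmt14

variable {R : Type*} [CommRing R]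

section Conv

variable {C A : Type*} [AddCommGroup C] [Module R C] [Coalgebra R C]
  [Ring A] [Algebra R A]

/-- Convolution product on `C →ₗ[R] A`. -/
noncomputable def conv (f g : C →ₗ[R] A) : C →ₗ[R] A :=
  LinearMap.mul' R A ∘ₗ TensorProduct.map f g ∘ₗ Coalgebra.comul

/-- Convolution unit. -/
noncomputable def cunit : C →ₗ[R] A := Algebra.linearMap R A ∘ₗ Coalgebra.counit

lemma conv_apply (f g : C →ₗ[R] A) (x : C) :
    conv f g x = LinearMap.mul' R A (TensorProduct.map f g (Coalgebra.comul x)) := rfl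

lemma map_conv_right (f g h : C →ₗ[R] A) :
    TensorProduct.map (conv f g) h
      = TensorProduct.map (LinearMap.mul' R A) LinearMap.id
          ∘ₗ TensorProduct.map (TensorProduct.map f g) h
          ∘ₗ (Coalgebra.comul (R := R)).rTensor C := by
  apply TensorProduct.ext'; intro x y; simp [conv_apply]

lemma map_conv_left (f g h : C →ₗ[R] A) :
    TensorProduct.map f (conv g h)
      = TensorProduct.map LinearMap.id (LinearMap.mul' R A)
          ∘ₗ TensorProduct.map f (TensorProduct.map g h)
          ∘ₗ (Coalgebra.comul (R := R)).lTensor C := by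
  apply TensorProduct.ext'; intro x y; simp [conv_apply]

lemma mul'_assoc' :
    LinearMap.mul' R A ∘ₗ TensorProduct.map (LinearMap.mul' R A) LinearMap.id
      = (LinearMap.mul' R A ∘ₗ TensorProduct.map LinearMap.id (LinearMap.mul' R A))
          ∘ₗ (TensorProduct.assoc R A A A).toLinearMap := by
  apply TensorProduct.ext_threefold; intros; simp [mul_assoc]

lemma conv_assoc (f g h : C →ₗ[R] A) : conv (conv f g) h = conv f (conv g h) := by
  apply LinearMap.ext; intro x
  rw [conv_apply, map_conv_right]
  rw [conv_apply, map_conv_left]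
  simp only [LinearMap.comp_apply]
  rw [← Coalgebra.coassoc_symm_apply, TensorProduct.map_map_assoc_symm]
  have := LinearMap.congr_fun (mul'_assoc' (R := R) (A := A))
    ((TensorProduct.assoc R A A A).symm
      (TensorProduct.map f (TensorProduct.map g h)
        ((Coalgebra.comul (R := R)).lTensor C (Coalgebra.comul x))))
  simp only [LinearMap.comp_apply, LinearEquiv.coe_coe, LinearEquiv.apply_symm_apply] at this
  rw [this]

lemma conv_cunit_left (f : C →ₗ[R] A) : conv cunit f = f := by
  apply LinearMap.ext; intro x
  have hsplit : TensorProduct.map (cunit (R := R) (C := C) (A := A)) f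
      = TensorProduct.map (Algebra.linearMap R A) f
          ∘ₗ (Coalgebra.counit (R := R)).rTensor C := by
    apply TensorProduct.ext'; intro a b; simp [cunit]
  rw [conv_apply, hsplit]
  simp only [LinearMap.comp_apply, Coalgebra.rTensor_counit_comul, TensorProduct.map_tmul,
    LinearMap.mul'_apply, Algebra.linearMap_apply, map_one, one_mul, LinearMap.id_apply]

lemma conv_cunit_right (f : C →ₗ[R] A) : conv f cunit = f := by
  apply LinearMap.ext; intro x
  have hsplit : TensorProduct.map f (cunit (R := R) (C := C) (A := A))
      = TensorProduct.map f (Algebra.linearMap R A)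
          ∘ₗ (Coalgebra.counit (R := R)).lTensor C := by
    apply TensorProduct.ext'; intro a b; simp [cunit]
  rw [conv_apply, hsplit]
  simp only [LinearMap.comp_apply, Coalgebra.lTensor_counit_comul, TensorProduct.map_tmul,
    LinearMap.mul'_apply, Algebra.linearMap_apply, map_one, mul_one, LinearMap.id_apply]

end Conv

section Hopf

variable {A : Type*} [Ring A] [HopfAlgebra R A]

lemma counit_antipode_linear :
    (Coalgebra.counit : A →ₗ[R] R) ∘ₗ HopfAlgebra.antipode (R := R)
      = (Coalgebra.counit : A →ₗ[R] R) := by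
  have key : ∀ u : A ⊗[R] A,
      LinearMap.mul' R R (TensorProduct.map
        ((Coalgebra.counit : A →ₗ[R] R) ∘ₗ HopfAlgebra.antipode (R := R))
        (Coalgebra.counit : A →ₗ[R] R) u)
      = Coalgebra.counit (R := R)
          (LinearMap.mul' R A ((HopfAlgebra.antipode (R := R)).rTensor A u)) := by
    intro u
    induction u using TensorProduct.induction_on with
    | zero => simp
    | tmul a b => simp [Bialgebra.counit_mul]
    | add x y hx hy => simp only [map_add, hx, hy]
  apply LinearMap.ext; intro x
  have h1 := key (Coalgebra.comul x)
  rw [HopfAlgebra.mul_antipode_rTensor_comul_apply, Bialgebra.counit_algebraMap] at h1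
  have h2 : LinearMap.mul' R R (TensorProduct.map
        ((Coalgebra.counit : A →ₗ[R] R) ∘ₗ HopfAlgebra.antipode (R := R))
        (Coalgebra.counit : A →ₗ[R] R) (Coalgebra.comul x))
      = Coalgebra.counit (R := R) (HopfAlgebra.antipode (R := R) x) := by
    have hsplit : TensorProduct.map
        ((Coalgebra.counit : A →ₗ[R] R) ∘ₗ HopfAlgebra.antipode (R := R))
        (Coalgebra.counit : A →ₗ[R] R)
        = TensorProduct.map ((Coalgebra.counit : A →ₗ[R] R) ∘ₗ HopfAlgebra.antipode (R := R))
            LinearMap.id ∘ₗ (Coalgebra.counit (R := R)).lTensor A := by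
      apply TensorProduct.ext'; intro a b; simp
    rw [hsplit]
    simp only [LinearMap.comp_apply, Coalgebra.lTensor_counit_comul, TensorProduct.map_tmul,
      LinearMap.mul'_apply, LinearMap.id_apply, mul_one]
  rw [h2] at h1
  simpa using h1

lemma counit_antipode (a : A) :
    Coalgebra.counit (R := R) (HopfAlgebra.antipode (R := R) a) = Coalgebra.counit (R := R) a :=
  LinearMap.congr_fun (counit_antipode_linear (R := R) (A := A)) a

/-- comultiplication is an algebra morphism, in `mul'` form. -/
lemma comul_mul'_map :
    LinearMap.mul' R (A ⊗[R] A)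
        ∘ₗ TensorProduct.map (Coalgebra.comul (R := R) (A := A)) Coalgebra.comul
      = (Coalgebra.comul (R := R)) ∘ₗ LinearMap.mul' R A := by
  apply TensorProduct.ext'; intro a b
  simp [Bialgebra.comul_mul]

lemma h1_conv :
    conv (R := R) (C := A) (A := A ⊗[R] A)
      ((Coalgebra.comul (R := R)) ∘ₗ HopfAlgebra.antipode (R := R)) Coalgebra.comul
    = cunit := by
  apply LinearMap.ext; intro x
  rw [conv_apply]
  have hsplit : TensorProduct.map
        ((Coalgebra.comul (R := R) (A := A)) ∘ₗ HopfAlgebra.antipode (R := R))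
        (Coalgebra.comul (R := R))
      = (TensorProduct.map Coalgebra.comul Coalgebra.comul)
          ∘ₗ (HopfAlgebra.antipode (R := R)).rTensor A := by
    apply TensorProduct.ext'; intro a b; simp
  rw [hsplit]
  simp only [LinearMap.comp_apply]
  have hmm := LinearMap.congr_fun (comul_mul'_map (R := R) (A := A))
    ((HopfAlgebra.antipode (R := R)).rTensor A (Coalgebra.comul x))
  simp only [LinearMap.comp_apply] at hmm
  rw [hmm]
  simp only [HopfAlgebra.mul_antipode_rTensor_comul_apply, Bialgebra.comul_algebraMap]
  rfl

section CoComm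

/-- Reassociator `(A ⊗ (A ⊗ A)) ⊗ A → (A ⊗ A) ⊗ (A ⊗ A)`. -/
noncomputable def zt (A : Type*) [AddCommGroup A] [Module R A] :
    (A ⊗[R] (A ⊗[R] A)) ⊗[R] A →ₗ[R] (A ⊗[R] A) ⊗[R] (A ⊗[R] A) :=
  (TensorProduct.assoc R (A ⊗[R] A) A A).toLinearMap
    ∘ₗ (TensorProduct.assoc R A A A).symm.toLinearMap.rTensor A

@[simp] lemma zt_tmul {A : Type*} [AddCommGroup A] [Module R A] (x u v y : A) :
    zt (R := R) A ((x ⊗ₜ (u ⊗ₜ v)) ⊗ₜ y) = (x ⊗ₜ u) ⊗ₜ[R] (v ⊗ₜ y) := rfl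

/-- `(x ⊗ m) ⊗ y ↦ (x * S y) ⊗ m`. -/
noncomputable def nu (A : Type*) [Ring A] [HopfAlgebra R A] :
    (A ⊗[R] A) ⊗[R] A →ₗ[R] A ⊗[R] A :=
  TensorProduct.map (LinearMap.mul' R A ∘ₗ (HopfAlgebra.antipode (R := R)).lTensor A)
      LinearMap.id
    ∘ₗ (TensorProduct.assoc R A A A).symm.toLinearMap
    ∘ₗ (TensorProduct.comm R A A).toLinearMap.lTensor A
    ∘ₗ (TensorProduct.assoc R A A A).toLinearMap

@[simp] lemma nu_tmul {A : Type*} [Ring A] [HopfAlgebra R A] (x m y : A) :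
    nu (R := R) A ((x ⊗ₜ m) ⊗ₜ y) = (x * HopfAlgebra.antipode (R := R) y) ⊗ₜ[R] m := by
  simp [nu, LinearMap.mul'_apply]

variable (hco : ∀ x : A, (TensorProduct.comm R A A) (Coalgebra.comul x) = Coalgebra.comul x)
include hco

lemma h2_conv :
    conv (R := R) (C := A) (A := A ⊗[R] A)
      (Coalgebra.comul (R := R))
      (TensorProduct.map (HopfAlgebra.antipode (R := R)) (HopfAlgebra.antipode (R := R))
        ∘ₗ Coalgebra.comul)
    = cunit := by
  apply LinearMap.ext; intro a
  rw [conv_apply]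
  -- step 1
  have s1 : TensorProduct.map (Coalgebra.comul (R := R) (A := A))
        (TensorProduct.map (HopfAlgebra.antipode (R := R)) (HopfAlgebra.antipode (R := R))
          ∘ₗ Coalgebra.comul)
      = ((TensorProduct.comm R A A).toLinearMap
          ∘ₗ TensorProduct.map (HopfAlgebra.antipode (R := R))
              (HopfAlgebra.antipode (R := R))).lTensor (A ⊗[R] A)
          ∘ₗ TensorProduct.map Coalgebra.comul Coalgebra.comul := by
    apply TensorProduct.ext'; intro x y
    simp only [TensorProduct.map_tmul, LinearMap.comp_apply, LinearMap.lTensor_tmul,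
      LinearMap.id_apply, LinearEquiv.coe_coe]
    congr 1
    conv_lhs => rw [← hco y]
    rw [TensorProduct.map_comm]
  rw [s1]
  simp only [LinearMap.comp_apply]
  -- step 2 : regrouping
  have hmapDD : TensorProduct.map (Coalgebra.comul (R := R) (A := A)) Coalgebra.comul
      = (Coalgebra.comul (R := R)).rTensor (A ⊗[R] A)
          ∘ₗ (Coalgebra.comul (R := R)).lTensor A := by
    apply TensorProduct.ext'; intro x y; simp
  have P2 : (Coalgebra.comul (R := R) (A := A)).rTensor (A ⊗[R] A)
        ∘ₗ (TensorProduct.assoc R A A A).toLinearMap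
      = zt (R := R) A ∘ₗ (TensorProduct.assoc R A A A).toLinearMap.rTensor A
          ∘ₗ ((Coalgebra.comul (R := R)).rTensor A).rTensor A := by
    apply TensorProduct.ext_threefold; intro x u y
    simp only [LinearMap.comp_apply, LinearEquiv.coe_coe, TensorProduct.assoc_tmul,
      LinearMap.rTensor_tmul]
    induction (Coalgebra.comul (R := R) x) using TensorProduct.induction_on with
    | zero => simp [TensorProduct.zero_tmul]
    | tmul p q => simp
    | add w1 w2 h1 h2 =>
        simp only [TensorProduct.add_tmul, map_add, h1, h2]
  have s2 : TensorProduct.map (Coalgebra.comul (R := R) (A := A)) Coalgebra.comul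
        (Coalgebra.comul a)
      = zt (R := R) A
          (((Coalgebra.comul (R := R)).lTensor A).rTensor A
            (((Coalgebra.comul (R := R)).rTensor A) (Coalgebra.comul a))) := by
    rw [hmapDD]
    simp only [LinearMap.comp_apply]
    rw [← Coalgebra.coassoc_apply]
    have hP2 := LinearMap.congr_fun P2
      ((Coalgebra.comul (R := R)).rTensor A (Coalgebra.comul a))
    simp only [LinearMap.comp_apply, LinearEquiv.coe_coe] at hP2 ⊢
    rw [hP2]
    rw [← LinearMap.rTensor_comp_apply, ← LinearMap.rTensor_comp_apply,
      ← LinearMap.rTensor_comp_apply]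
    congr 2
    rw [LinearMap.comp_assoc]
    rw [Coalgebra.coassoc]
  rw [s2]
  -- step 3 : middle collapse
  have s3 : LinearMap.mul' R (A ⊗[R] A)
        ∘ₗ ((TensorProduct.comm R A A).toLinearMap
            ∘ₗ TensorProduct.map (HopfAlgebra.antipode (R := R))
                (HopfAlgebra.antipode (R := R))).lTensor (A ⊗[R] A)
        ∘ₗ zt (R := R) A
      = nu (R := R) A
          ∘ₗ ((LinearMap.mul' R A
              ∘ₗ (HopfAlgebra.antipode (R := R)).lTensor A).lTensor A).rTensor A := by
    apply TensorProduct.ext_threefold; intro x q y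
    induction q using TensorProduct.induction_on with
    | zero =>
        rw [TensorProduct.tmul_zero, TensorProduct.zero_tmul, map_zero, map_zero]
    | tmul u v =>
        simp [LinearMap.mul'_apply, Algebra.TensorProduct.tmul_mul_tmul]
    | add q1 q2 hq1 hq2 =>
        rw [TensorProduct.tmul_add, TensorProduct.add_tmul, map_add, map_add, hq1, hq2]
  have hs3 := LinearMap.congr_fun s3
    (((Coalgebra.comul (R := R)).lTensor A).rTensor A
      (((Coalgebra.comul (R := R)).rTensor A) (Coalgebra.comul a)))
  simp only [LinearMap.comp_apply] at hs3
  rw [hs3]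
  rw [← LinearMap.rTensor_comp_apply]
  rw [← LinearMap.lTensor_comp]
  rw [show (LinearMap.mul' R A ∘ₗ (HopfAlgebra.antipode (R := R) (A := A)).lTensor A)
        ∘ₗ Coalgebra.comul = Algebra.linearMap R A ∘ₗ Coalgebra.counit from by
    rw [LinearMap.comp_assoc]; exact HopfAlgebra.mul_antipode_lTensor_comul]
  rw [← LinearMap.rTensor_comp_apply]
  have Q1 : ((Algebra.linearMap R A ∘ₗ (Coalgebra.counit : A →ₗ[R] R)).lTensor A)
        ∘ₗ Coalgebra.comul = (TensorProduct.mk R A A).flip 1 := by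
    apply LinearMap.ext; intro x
    simp only [LinearMap.comp_apply, LinearMap.lTensor_comp, Coalgebra.lTensor_counit_comul]
    simp [TensorProduct.mk_apply]
  rw [Q1]
  have Q2 : nu (R := R) A ∘ₗ ((TensorProduct.mk R A A).flip 1).rTensor A
      = (TensorProduct.mk R A A).flip 1
          ∘ₗ LinearMap.mul' R A ∘ₗ (HopfAlgebra.antipode (R := R)).lTensor A := by
    apply TensorProduct.ext'; intro x y
    simp [LinearMap.mul'_apply, TensorProduct.mk_apply]
  have hQ2 := LinearMap.congr_fun Q2 (Coalgebra.comul a)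
  simp only [LinearMap.comp_apply] at hQ2
  rw [hQ2]
  rw [HopfAlgebra.mul_antipode_lTensor_comul_apply]
  simp [cunit, Algebra.TensorProduct.algebraMap_apply, TensorProduct.mk_apply]

lemma comul_antipode :
    (Coalgebra.comul (R := R)) ∘ₗ HopfAlgebra.antipode (R := R) (A := A)
      = TensorProduct.map (HopfAlgebra.antipode (R := R)) (HopfAlgebra.antipode (R := R))
          ∘ₗ Coalgebra.comul := by
  have h1 := h1_conv (R := R) (A := A)
  have h2 := h2_conv (R := R) (A := A) hco
  calc (Coalgebra.comul (R := R)) ∘ₗ HopfAlgebra.antipode (R := R) (A := A)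
      = conv ((Coalgebra.comul (R := R)) ∘ₗ HopfAlgebra.antipode (R := R) (A := A)) cunit :=
        (conv_cunit_right _).symm
    _ = conv ((Coalgebra.comul (R := R)) ∘ₗ HopfAlgebra.antipode (R := R) (A := A))
          (conv (Coalgebra.comul (R := R))
            (TensorProduct.map (HopfAlgebra.antipode (R := R)) (HopfAlgebra.antipode (R := R))
              ∘ₗ Coalgebra.comul)) := by rw [h2]
    _ = conv (conv ((Coalgebra.comul (R := R)) ∘ₗ HopfAlgebra.antipode (R := R) (A := A))
          (Coalgebra.comul (R := R)))
          (TensorProduct.map (HopfAlgebra.antipode (R := R)) (HopfAlgebra.antipode (R := R))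
            ∘ₗ Coalgebra.comul) := (conv_assoc _ _ _).symm
    _ = conv cunit (TensorProduct.map (HopfAlgebra.antipode (R := R))
            (HopfAlgebra.antipode (R := R)) ∘ₗ Coalgebra.comul) := by rw [h1]
    _ = TensorProduct.map (HopfAlgebra.antipode (R := R)) (HopfAlgebra.antipode (R := R))
          ∘ₗ Coalgebra.comul := conv_cunit_left _

lemma comul_antipode_apply (a : A) :
    Coalgebra.comul (R := R) (HopfAlgebra.antipode (R := R) a)
      = TensorProduct.map (HopfAlgebra.antipode (R := R)) (HopfAlgebra.antipode (R := R))
          (Coalgebra.comul a) :=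
  LinearMap.congr_fun (comul_antipode (R := R) (A := A) hco) a

end CoComm

end Hopf

section Main

variable {H K : Type*} [Ring H] [Ring K] [HopfAlgebra R H] [HopfAlgebra R K]
variable (act : H →ₗ[R] K →ₗ[R] H) (T : H →ₗ[R] K)

/-- `e ⊗ f ↦ (e ◁◁ T f₁) f₂` as a linear map. -/
noncomputable def starmap : H ⊗[R] H →ₗ[R] H :=
  LinearMap.mul' R H
    ∘ₗ TensorProduct.map (TensorProduct.lift act) LinearMap.id
    ∘ₗ (TensorProduct.assoc R H K H).symm.toLinearMap
    ∘ₗ (T.rTensor H ∘ₗ Coalgebra.comul).lTensor H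

lemma starT_eq (e f : H) : starT act T e f = starmap act T (e ⊗ₜ f) := by
  unfold starT starmap
  simp only [LinearMap.comp_apply, LinearMap.lTensor_tmul]
  induction (Coalgebra.comul (R := R) f) using TensorProduct.induction_on with
  | zero => simp [TensorProduct.tmul_zero]
  | tmul p q => simp [TensorProduct.assoc_symm_tmul, TensorProduct.lift.tmul]
  | add u v hu hv =>
      simp only [map_add, TensorProduct.tmul_add, hu, hv]

lemma hT_map (hT : ∀ e f : H, T e * T f = T (starT act T e f)) :
    LinearMap.mul' R K ∘ₗ TensorProduct.map T T = T ∘ₗ starmap act T := by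
  apply TensorProduct.ext'; intro e f
  simp only [LinearMap.comp_apply, TensorProduct.map_tmul, LinearMap.mul'_apply]
  rw [hT, starT_eq]

lemma T_one
    (hone_act : ∀ k : K, act 1 k = Coalgebra.counit (R := R) k • (1 : H))
    (hTcomul : ∀ e : H, Coalgebra.comul (T e) = (TensorProduct.map T T) (Coalgebra.comul e))
    (hTcounit : ∀ e : H, Coalgebra.counit (R := R) (T e) = Coalgebra.counit (R := R) e)
    (hT : ∀ e f : H, T e * T f = T (starT act T e f)) :
    T 1 = 1 := by
  have hcomul_one : Coalgebra.comul (R := R) (1 : H) = (1 : H) ⊗ₜ (1 : H) := by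
    simp [Algebra.TensorProduct.one_def]
  have hidem : T 1 * T 1 = T 1 := by
    rw [hT 1 1]
    congr 1
    unfold starT
    rw [hcomul_one]
    simp only [TensorProduct.map_tmul, LinearMap.comp_apply, LinearMap.id_apply,
      LinearMap.mul'_apply]
    rw [hone_act, hTcounit]
    simp
  have hgrp : Coalgebra.comul (R := R) (T 1) = T 1 ⊗ₜ T 1 := by
    rw [hTcomul, hcomul_one]; simp
  have hinv : HopfAlgebra.antipode (R := R) (T 1) * T 1 = 1 := by
    have := HopfAlgebra.mul_antipode_rTensor_comul_apply (R := R) (a := T 1)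
    rw [hgrp] at this
    simp only [LinearMap.rTensor_tmul, LinearMap.mul'_apply] at this
    rw [this, hTcounit]
    simp
  calc T 1 = 1 * T 1 := (one_mul _).symm
    _ = (HopfAlgebra.antipode (R := R) (T 1) * T 1) * T 1 := by rw [hinv]
    _ = HopfAlgebra.antipode (R := R) (T 1) * (T 1 * T 1) := by rw [mul_assoc]
    _ = HopfAlgebra.antipode (R := R) (T 1) * T 1 := by rw [hidem]
    _ = 1 := hinv

/-- The map `h ↦ h₁ ◁◁ S_K (B h₂)`. -/
noncomputable def Pmap (B : H →ₗ[R] K) : H →ₗ[R] H :=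
  TensorProduct.lift act
    ∘ₗ ((HopfAlgebra.antipode (R := R) (A := K)) ∘ₗ B).lTensor H
    ∘ₗ Coalgebra.comul

lemma hash_eq_conv (A B : H →ₗ[R] K)
    (hB : (Coalgebra.comul (R := R)) ∘ₗ B = TensorProduct.map B B ∘ₗ Coalgebra.comul) :
    hashMul act A B = conv (A ∘ₗ Pmap act B) B := by
  apply LinearMap.ext; intro f
  unfold hashMul
  simp only [LinearMap.comp_apply]
  -- expand comul ∘ B using hB
  have c1 : TensorProduct.map (LinearMap.id : H →ₗ[R] H) ((Coalgebra.comul (R := R)) ∘ₗ B)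
      = TensorProduct.map LinearMap.id (TensorProduct.map B B)
          ∘ₗ (Coalgebra.comul (R := R)).lTensor H := by
    apply TensorProduct.ext'; intro x y
    simp only [TensorProduct.map_tmul, LinearMap.comp_apply, LinearMap.id_apply,
      LinearMap.lTensor_tmul]
    have := LinearMap.congr_fun hB y
    simp only [LinearMap.comp_apply] at this
    rw [this]
  rw [c1]
  simp only [LinearMap.comp_apply, LinearEquiv.coe_coe]
  rw [← TensorProduct.map_map_assoc_symm, Coalgebra.coassoc_symm_apply]
  -- collapse the stack of maps
  have c4 : (TensorProduct.map A LinearMap.id : H ⊗[R] K →ₗ[R] K ⊗[R] K)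
        ∘ₗ TensorProduct.map (TensorProduct.lift act) LinearMap.id
        ∘ₗ TensorProduct.map
            (TensorProduct.map LinearMap.id (HopfAlgebra.antipode (R := R))) LinearMap.id
        ∘ₗ TensorProduct.map (TensorProduct.map LinearMap.id B) B
        ∘ₗ (Coalgebra.comul (R := R)).rTensor H
      = TensorProduct.map (A ∘ₗ Pmap act B) B := by
    apply TensorProduct.ext'; intro x y
    simp only [LinearMap.comp_apply, TensorProduct.map_tmul, LinearMap.rTensor_tmul,
      LinearMap.id_apply, Pmap]
    congr 2
    rw [show (TensorProduct.map LinearMap.id (HopfAlgebra.antipode (R := R)) :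
          H ⊗[R] K →ₗ[R] H ⊗[R] K) = (HopfAlgebra.antipode (R := R) (A := K)).lTensor H
        from rfl,
      show (TensorProduct.map LinearMap.id B : H ⊗[R] H →ₗ[R] H ⊗[R] K) = B.lTensor H
        from rfl,
      ← LinearMap.lTensor_comp_apply]
  have hc4 := LinearMap.congr_fun c4 (Coalgebra.comul f)
  simp only [LinearMap.comp_apply] at hc4
  rw [hc4, conv_apply]

lemma red1 (hT : ∀ e f : H, T e * T f = T (starT act T e f)) (P Q : H →ₗ[R] H) :
    conv (T ∘ₗ P) (T ∘ₗ Q)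
      = T ∘ₗ starmap act T ∘ₗ TensorProduct.map P Q ∘ₗ Coalgebra.comul := by
  apply LinearMap.ext; intro f
  rw [conv_apply]
  simp only [LinearMap.comp_apply]
  have e1 : (TensorProduct.map (T ∘ₗ P) (T ∘ₗ Q) : H ⊗[R] H →ₗ[R] K ⊗[R] K)
      = TensorProduct.map T T ∘ₗ TensorProduct.map P Q := by
    apply TensorProduct.ext'; intro x y; simp
  rw [e1]
  simp only [LinearMap.comp_apply]
  have e2 := LinearMap.congr_fun (hT_map (R := R) act T hT)
    (TensorProduct.map P Q (Coalgebra.comul f))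
  simp only [LinearMap.comp_apply] at e2
  rw [e2]

lemma red2 (P Q : H →ₗ[R] H) (Q₁ : H →ₗ[R] K) (Q₂ : H →ₗ[R] H)
    (hQ : T.rTensor H ∘ₗ Coalgebra.comul ∘ₗ Q = TensorProduct.map Q₁ Q₂ ∘ₗ Coalgebra.comul) :
    starmap act T ∘ₗ TensorProduct.map P Q ∘ₗ Coalgebra.comul
      = conv (TensorProduct.lift act ∘ₗ TensorProduct.map P Q₁ ∘ₗ Coalgebra.comul) Q₂ := by
  apply LinearMap.ext; intro f
  rw [conv_apply]
  unfold starmap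
  simp only [LinearMap.comp_apply]
  have d1 : ((T.rTensor H ∘ₗ Coalgebra.comul).lTensor H) ∘ₗ TensorProduct.map P Q
      = TensorProduct.map P (TensorProduct.map Q₁ Q₂)
          ∘ₗ (Coalgebra.comul (R := R)).lTensor H := by
    apply TensorProduct.ext'; intro x y
    simp only [LinearMap.comp_apply, TensorProduct.map_tmul, LinearMap.lTensor_tmul]
    congr 1
    have := LinearMap.congr_fun hQ y
    simp only [LinearMap.comp_apply] at this
    exact this
  have hd1 := LinearMap.congr_fun d1 (Coalgebra.comul f)
  simp only [LinearMap.comp_apply] at hd1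
  rw [hd1]
  simp only [LinearEquiv.coe_coe]
  rw [← TensorProduct.map_map_assoc_symm, Coalgebra.coassoc_symm_apply]
  have d2 : (TensorProduct.map (TensorProduct.lift act) LinearMap.id :
        (H ⊗[R] K) ⊗[R] H →ₗ[R] H ⊗[R] H)
        ∘ₗ TensorProduct.map (TensorProduct.map P Q₁) Q₂
        ∘ₗ (Coalgebra.comul (R := R)).rTensor H
      = TensorProduct.map
          (TensorProduct.lift act ∘ₗ TensorProduct.map P Q₁ ∘ₗ Coalgebra.comul) Q₂ := by
    apply TensorProduct.ext'; intro x y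
    simp only [LinearMap.comp_apply, TensorProduct.map_tmul, LinearMap.rTensor_tmul,
      LinearMap.id_apply]
  have hd2 := LinearMap.congr_fun d2 (Coalgebra.comul f)
  simp only [LinearMap.comp_apply] at hd2
  rw [hd2]

lemma inner_collapse (B' : H →ₗ[R] K)
    (hB' : (Coalgebra.comul (R := R)) ∘ₗ B' = TensorProduct.map B' B' ∘ₗ Coalgebra.comul)
    (hB'c : (Coalgebra.counit : K →ₗ[R] R) ∘ₗ B' = Coalgebra.counit) :
    LinearMap.mul' R K
        ∘ₗ TensorProduct.map ((HopfAlgebra.antipode (R := R)) ∘ₗ B') B'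
        ∘ₗ Coalgebra.comul
      = Algebra.linearMap R K ∘ₗ Coalgebra.counit := by
  apply LinearMap.ext; intro x
  simp only [LinearMap.comp_apply]
  have e1 : (TensorProduct.map ((HopfAlgebra.antipode (R := R)) ∘ₗ B') B' :
        H ⊗[R] H →ₗ[R] K ⊗[R] K)
      = (HopfAlgebra.antipode (R := R) (A := K)).rTensor K
          ∘ₗ TensorProduct.map B' B' := by
    apply TensorProduct.ext'; intro a b; simp
  rw [e1]
  simp only [LinearMap.comp_apply]
  have e2 := LinearMap.congr_fun hB' x
  simp only [LinearMap.comp_apply] at e2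
  rw [← e2, HopfAlgebra.mul_antipode_rTensor_comul_apply]
  have e3 := LinearMap.congr_fun hB'c x
  simp only [LinearMap.comp_apply] at e3
  rw [e3]
  rfl

lemma act_comp_map (hact_comp : ∀ (h : H) (k k' : K), act (act h k) k' = act h (k * k')) :
    TensorProduct.lift act ∘ₗ TensorProduct.map (TensorProduct.lift act)
        (LinearMap.id : K →ₗ[R] K)
      = TensorProduct.lift act ∘ₗ (LinearMap.mul' R K).lTensor H
          ∘ₗ (TensorProduct.assoc R H K K).toLinearMap := by
  apply TensorProduct.ext_threefold; intro h k k'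
  simp [hact_comp, LinearMap.mul'_apply]

lemma act_unit_pointwise (hact_one : ∀ h : H, act h 1 = h) (h : H) :
    TensorProduct.lift act
      (((Algebra.linearMap R K ∘ₗ (Coalgebra.counit : H →ₗ[R] R)).lTensor H)
        (Coalgebra.comul h)) = h := by
  rw [LinearMap.lTensor_comp, LinearMap.comp_apply, Coalgebra.lTensor_counit_comul]
  simp [hact_one]

lemma antipode_act (hact_antipode : ∀ (h : H) (k : K),
      HopfAlgebra.antipode (R := R) (act h k) = act (HopfAlgebra.antipode (R := R) h) k) :
    (HopfAlgebra.antipode (R := R) (A := H)) ∘ₗ TensorProduct.lift act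
      = TensorProduct.lift act ∘ₗ (HopfAlgebra.antipode (R := R) (A := H)).rTensor K := by
  apply TensorProduct.ext'; intro h k
  simp [hact_antipode]

lemma W_eq_id (B : H →ₗ[R] K)
    (hB : (Coalgebra.comul (R := R)) ∘ₗ B = TensorProduct.map B B ∘ₗ Coalgebra.comul)
    (hBc : (Coalgebra.counit : K →ₗ[R] R) ∘ₗ B = Coalgebra.counit)
    (hact_comp : ∀ (h : H) (k k' : K), act (act h k) k' = act h (k * k'))
    (hact_one : ∀ h : H, act h 1 = h) :
    TensorProduct.lift act ∘ₗ TensorProduct.map (Pmap act B) B ∘ₗ Coalgebra.comul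
      = LinearMap.id := by
  apply LinearMap.ext; intro h
  simp only [LinearMap.comp_apply, LinearMap.id_apply]
  -- expand Pmap
  have a1 : (TensorProduct.map (Pmap act B) B : H ⊗[R] H →ₗ[R] H ⊗[R] K)
      = TensorProduct.map (TensorProduct.lift act) LinearMap.id
          ∘ₗ TensorProduct.map
              (TensorProduct.map LinearMap.id
                ((HopfAlgebra.antipode (R := R)) ∘ₗ B)) B
          ∘ₗ (Coalgebra.comul (R := R)).rTensor H := by
    apply TensorProduct.ext'; intro x y
    simp only [LinearMap.comp_apply, TensorProduct.map_tmul, LinearMap.rTensor_tmul,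
      LinearMap.id_apply, Pmap]
    rfl
  rw [a1]
  simp only [LinearMap.comp_apply]
  have a2 := LinearMap.congr_fun (act_comp_map (R := R) act hact_comp)
    (TensorProduct.map
      (TensorProduct.map LinearMap.id ((HopfAlgebra.antipode (R := R)) ∘ₗ B)) B
      ((Coalgebra.comul (R := R)).rTensor H (Coalgebra.comul h)))
  simp only [LinearMap.comp_apply, LinearEquiv.coe_coe] at a2
  rw [a2]
  rw [← TensorProduct.map_map_assoc, Coalgebra.coassoc_apply]
  -- now: lift act (lT μ_K (map id (map (S∘B) B) (lT Δ (Δ h))))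
  have a3 : ((LinearMap.mul' R K).lTensor H)
        ∘ₗ TensorProduct.map (LinearMap.id : H →ₗ[R] H)
            (TensorProduct.map ((HopfAlgebra.antipode (R := R)) ∘ₗ B) B)
        ∘ₗ (Coalgebra.comul (R := R)).lTensor H
      = (LinearMap.mul' R K
          ∘ₗ TensorProduct.map ((HopfAlgebra.antipode (R := R)) ∘ₗ B) B
          ∘ₗ Coalgebra.comul).lTensor H := by
    apply TensorProduct.ext'; intro x y
    simp only [LinearMap.comp_apply, TensorProduct.map_tmul, LinearMap.lTensor_tmul,
      LinearMap.id_apply]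
  have ha3 := LinearMap.congr_fun a3 (Coalgebra.comul h)
  simp only [LinearMap.comp_apply] at ha3
  rw [ha3, inner_collapse (R := R) B hB hBc]
  exact act_unit_pointwise (R := R) act hact_one h

lemma W2_eq (hTcomul : ∀ e : H, Coalgebra.comul (T e) = (TensorProduct.map T T) (Coalgebra.comul e))
    (hTcounit : ∀ e : H, Coalgebra.counit (R := R) (T e) = Coalgebra.counit (R := R) e)
    (hact_comp : ∀ (h : H) (k k' : K), act (act h k) k' = act h (k * k'))
    (hact_one : ∀ h : H, act h 1 = h)
    (hact_antipode : ∀ (h : H) (k : K),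
      HopfAlgebra.antipode (R := R) (act h k) = act (HopfAlgebra.antipode (R := R) h) k) :
    TensorProduct.lift act
        ∘ₗ TensorProduct.map
            (TensorProduct.lift act
              ∘ₗ TensorProduct.map (HopfAlgebra.antipode (R := R))
                  ((HopfAlgebra.antipode (R := R)) ∘ₗ T)
              ∘ₗ Coalgebra.comul) T
        ∘ₗ Coalgebra.comul
      = HopfAlgebra.antipode (R := R) := by
  apply LinearMap.ext; intro h
  simp only [LinearMap.comp_apply]
  have a1 : (TensorProduct.map
        (TensorProduct.lift act
          ∘ₗ TensorProduct.map (HopfAlgebra.antipode (R := R))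
              ((HopfAlgebra.antipode (R := R)) ∘ₗ T)
          ∘ₗ Coalgebra.comul) T : H ⊗[R] H →ₗ[R] H ⊗[R] K)
      = TensorProduct.map (TensorProduct.lift act) LinearMap.id
          ∘ₗ TensorProduct.map
              (TensorProduct.map (HopfAlgebra.antipode (R := R))
                ((HopfAlgebra.antipode (R := R)) ∘ₗ T)) T
          ∘ₗ (Coalgebra.comul (R := R)).rTensor H := by
    apply TensorProduct.ext'; intro x y
    simp only [LinearMap.comp_apply, TensorProduct.map_tmul, LinearMap.rTensor_tmul,
      LinearMap.id_apply]
  rw [a1]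
  simp only [LinearMap.comp_apply]
  have a2 := LinearMap.congr_fun (act_comp_map (R := R) act hact_comp)
    (TensorProduct.map
      (TensorProduct.map (HopfAlgebra.antipode (R := R))
        ((HopfAlgebra.antipode (R := R)) ∘ₗ T)) T
      ((Coalgebra.comul (R := R)).rTensor H (Coalgebra.comul h)))
  simp only [LinearMap.comp_apply, LinearEquiv.coe_coe] at a2
  rw [a2]
  rw [← TensorProduct.map_map_assoc, Coalgebra.coassoc_apply]
  have a3 : ((LinearMap.mul' R K).lTensor H)
        ∘ₗ TensorProduct.map (HopfAlgebra.antipode (R := R) (A := H))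
            (TensorProduct.map ((HopfAlgebra.antipode (R := R)) ∘ₗ T) T)
        ∘ₗ (Coalgebra.comul (R := R)).lTensor H
      = (HopfAlgebra.antipode (R := R) (A := H)).rTensor K
          ∘ₗ (LinearMap.mul' R K
              ∘ₗ TensorProduct.map ((HopfAlgebra.antipode (R := R)) ∘ₗ T) T
              ∘ₗ Coalgebra.comul).lTensor H := by
    apply TensorProduct.ext'; intro x y
    simp only [LinearMap.comp_apply, TensorProduct.map_tmul, LinearMap.lTensor_tmul,
      LinearMap.rTensor_tmul, LinearMap.id_apply]
  have ha3 := LinearMap.congr_fun a3 (Coalgebra.comul h)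
  simp only [LinearMap.comp_apply] at ha3
  rw [ha3]
  have hTc : (Coalgebra.comul (R := R)) ∘ₗ T = TensorProduct.map T T ∘ₗ Coalgebra.comul :=
    LinearMap.ext hTcomul
  have hTcc : (Coalgebra.counit : K →ₗ[R] R) ∘ₗ T = Coalgebra.counit :=
    LinearMap.ext hTcounit
  rw [inner_collapse (R := R) T hTc hTcc]
  have a4 := LinearMap.congr_fun (antipode_act (R := R) act hact_antipode)
    (((Algebra.linearMap R K ∘ₗ (Coalgebra.counit : H →ₗ[R] R)).lTensor H)
      (Coalgebra.comul h))
  simp only [LinearMap.comp_apply] at a4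
  rw [← a4, act_unit_pointwise (R := R) act hact_one h]

lemma conv_id_antipode {A : Type*} [Ring A] [HopfAlgebra R A] :
    conv (R := R) (LinearMap.id) (HopfAlgebra.antipode (R := R) (A := A)) = cunit := by
  have : conv (R := R) (LinearMap.id) (HopfAlgebra.antipode (R := R) (A := A))
      = LinearMap.mul' R A ∘ₗ (HopfAlgebra.antipode (R := R)).lTensor A
          ∘ₗ Coalgebra.comul := rfl
  rw [this, HopfAlgebra.mul_antipode_lTensor_comul]
  rfl

lemma conv_antipode_id {A : Type*} [Ring A] [HopfAlgebra R A] :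
    conv (R := R) (HopfAlgebra.antipode (R := R) (A := A)) LinearMap.id = cunit := by
  have : conv (R := R) (HopfAlgebra.antipode (R := R) (A := A)) LinearMap.id
      = LinearMap.mul' R A ∘ₗ (HopfAlgebra.antipode (R := R)).rTensor A
          ∘ₗ Coalgebra.comul := rfl
  rw [this, HopfAlgebra.mul_antipode_rTensor_comul]
  rfl

lemma T_cunit (hT1 : T 1 = 1) :
    T ∘ₗ (cunit : H →ₗ[R] H) = (cunit : H →ₗ[R] K) := by
  apply LinearMap.ext; intro h
  simp only [cunit, LinearMap.comp_apply, Algebra.linearMap_apply]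
  rw [Algebra.algebraMap_eq_smul_one, map_smul, hT1, ← Algebra.algebraMap_eq_smul_one]

end Main


end Stmt14


open Stmt14

/-- An 𝒪-Hopf operator `T` on the universal envelope of a right Lie module
(a right Hopf module `(H, ◁◁, K)` of cocommutative Hopf algebras) is invertible for the
`#`-product, with `T^{#-1} = T ∘ S_H`: `T # (T∘S) = η∘ε = (T∘S) # T`. -/
theorem OHopf_operator_hash_inverse
    {R H K : Type*} [CommRing R] [Ring H] [Ring K]
    [HopfAlgebra R H] [HopfAlgebra R K]
    (hcoH : ∀ x : H, (TensorProduct.comm R H H) (Coalgebra.comul x) = Coalgebra.comul x)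
    (hcoK : ∀ x : K, (TensorProduct.comm R K K) (Coalgebra.comul x) = Coalgebra.comul x)
    (act : H →ₗ[R] K →ₗ[R] H)
    (hact_one : ∀ h : H, act h 1 = h)
    (hone_act : ∀ k : K, act 1 k = Coalgebra.counit (R := R) k • (1 : H))
    (hact_mul : ∀ (h₁ h₂ : H) (k : K),
      act (h₁ * h₂) k
        = (LinearMap.mul' R H) ((TensorProduct.map (act h₁) (act h₂)) (Coalgebra.comul k)))
    (hact_comp : ∀ (h : H) (k k' : K), act (act h k) k' = act h (k * k'))
    (hact_comul : ∀ (h : H) (k : K),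
      Coalgebra.comul (act h k)
        = (TensorProduct.map (TensorProduct.lift act) (TensorProduct.lift act))
            ((TensorProduct.tensorTensorTensorComm R H H K K)
              (Coalgebra.comul h ⊗ₜ[R] Coalgebra.comul k)))
    (hact_antipode : ∀ (h : H) (k : K),
      HopfAlgebra.antipode (R := R) (act h k) = act (HopfAlgebra.antipode (R := R) h) k)
    (T : H →ₗ[R] K)
    (hTcomul : ∀ e : H, Coalgebra.comul (T e) = (TensorProduct.map T T) (Coalgebra.comul e))
    (hTcounit : ∀ e : H, Coalgebra.counit (R := R) (T e) = Coalgebra.counit (R := R) e)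
    (hT : ∀ e f : H, T e * T f = T (starT act T e f)) :
    hashMul act T (T ∘ₗ HopfAlgebra.antipode (R := R))
        = (Algebra.linearMap R K) ∘ₗ (Coalgebra.counit : H →ₗ[R] R) ∧
    hashMul act (T ∘ₗ HopfAlgebra.antipode (R := R)) T
        = (Algebra.linearMap R K) ∘ₗ (Coalgebra.counit : H →ₗ[R] R) := by
  have hTc : (Coalgebra.comul (R := R)) ∘ₗ T = TensorProduct.map T T ∘ₗ Coalgebra.comul :=
    LinearMap.ext hTcomul
  have hTcc : (Coalgebra.counit : K →ₗ[R] R) ∘ₗ T = Coalgebra.counit :=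
    LinearMap.ext hTcounit
  have hT1 : T 1 = 1 := T_one (R := R) act T hone_act hTcomul hTcounit hT
  have hSH := comul_antipode (R := R) (A := H) hcoH
  -- T ∘ S is a coalgebra morphism
  have hTS : (Coalgebra.comul (R := R)) ∘ₗ (T ∘ₗ HopfAlgebra.antipode (R := R))
      = TensorProduct.map (T ∘ₗ HopfAlgebra.antipode (R := R))
          (T ∘ₗ HopfAlgebra.antipode (R := R)) ∘ₗ Coalgebra.comul := by
    apply LinearMap.ext; intro h
    simp only [LinearMap.comp_apply]
    rw [hTcomul]
    have hSHh := LinearMap.congr_fun hSH h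
    simp only [LinearMap.comp_apply] at hSHh
    rw [hSHh]
    have : ∀ u : H ⊗[R] H,
        TensorProduct.map T T (TensorProduct.map
          (HopfAlgebra.antipode (R := R)) (HopfAlgebra.antipode (R := R)) u)
        = TensorProduct.map (T ∘ₗ HopfAlgebra.antipode (R := R))
            (T ∘ₗ HopfAlgebra.antipode (R := R)) u := by
      intro u
      induction u using TensorProduct.induction_on with
      | zero => simp
      | tmul a b => simp
      | add a b ha hb => simp [map_add, ha, hb]
    rw [this]
  have hTSc : (Coalgebra.counit : K →ₗ[R] R) ∘ₗ (T ∘ₗ HopfAlgebra.antipode (R := R))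
      = Coalgebra.counit := by
    apply LinearMap.ext; intro h
    simp only [LinearMap.comp_apply]
    rw [hTcounit, counit_antipode]
  constructor
  · -- goal 1 : T # (T∘S) = η∘ε
    rw [hash_eq_conv (R := R) act T (T ∘ₗ HopfAlgebra.antipode (R := R)) hTS]
    rw [red1 (R := R) act T hT (Pmap act (T ∘ₗ HopfAlgebra.antipode (R := R)))
      (HopfAlgebra.antipode (R := R))]
    rw [red2 (R := R) act T (Pmap act (T ∘ₗ HopfAlgebra.antipode (R := R)))
      (HopfAlgebra.antipode (R := R)) (T ∘ₗ HopfAlgebra.antipode (R := R))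
      (HopfAlgebra.antipode (R := R))
      (by
        -- rT T ∘ Δ ∘ S = map (T∘S) S ∘ Δ
        apply LinearMap.ext; intro h
        simp only [LinearMap.comp_apply]
        have hSHh := LinearMap.congr_fun hSH h
        simp only [LinearMap.comp_apply] at hSHh
        rw [hSHh]
        induction (Coalgebra.comul (R := R) h) using TensorProduct.induction_on with
        | zero => simp
        | tmul a b => simp
        | add a b ha hb => simp [map_add, ha, hb])]
    rw [W_eq_id (R := R) act (T ∘ₗ HopfAlgebra.antipode (R := R)) hTS hTSc hact_comp hact_one]
    rw [conv_id_antipode]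
    rw [T_cunit (R := R) T hT1]
    rfl
  · -- goal 2 : (T∘S) # T = η∘ε
    rw [hash_eq_conv (R := R) act (T ∘ₗ HopfAlgebra.antipode (R := R)) T hTc]
    have hPhi : (T ∘ₗ HopfAlgebra.antipode (R := R)) ∘ₗ Pmap act T
        = T ∘ₗ (TensorProduct.lift act
            ∘ₗ TensorProduct.map (HopfAlgebra.antipode (R := R))
                ((HopfAlgebra.antipode (R := R)) ∘ₗ T)
            ∘ₗ Coalgebra.comul) := by
      apply LinearMap.ext; intro h
      simp only [LinearMap.comp_apply, Pmap]
      congr 1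
      have a4 := LinearMap.congr_fun (antipode_act (R := R) act hact_antipode)
        ((((HopfAlgebra.antipode (R := R) (A := K)) ∘ₗ T).lTensor H) (Coalgebra.comul h))
      simp only [LinearMap.comp_apply] at a4
      rw [a4]
      congr 1
      induction (Coalgebra.comul (R := R) h) using TensorProduct.induction_on with
      | zero => simp
      | tmul a b => simp
      | add a b ha hb => simp [map_add, ha, hb]
    rw [hPhi]
    rw [show conv (T ∘ₗ (TensorProduct.lift act
            ∘ₗ TensorProduct.map (HopfAlgebra.antipode (R := R))
                ((HopfAlgebra.antipode (R := R)) ∘ₗ T)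
            ∘ₗ Coalgebra.comul)) T
        = conv (T ∘ₗ (TensorProduct.lift act
            ∘ₗ TensorProduct.map (HopfAlgebra.antipode (R := R))
                ((HopfAlgebra.antipode (R := R)) ∘ₗ T)
            ∘ₗ Coalgebra.comul)) (T ∘ₗ (LinearMap.id : H →ₗ[R] H)) from by
      rw [LinearMap.comp_id]]
    rw [red1 (R := R) act T hT _ LinearMap.id]
    rw [red2 (R := R) act T _ LinearMap.id T LinearMap.id
      (by
        apply LinearMap.ext; intro h
        simp only [LinearMap.comp_apply, LinearMap.id_apply]
        induction (Coalgebra.comul (R := R) h) using TensorProduct.induction_on with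
        | zero => simp
        | tmul a b => simp
        | add a b ha hb => simp [map_add, ha, hb])]
    rw [W2_eq (R := R) act T hTcomul hTcounit hact_comp hact_one hact_antipode]
    rw [conv_antipode_id]
    rw [T_cunit (R := R) T hT1]
    rfl
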